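/- (Abstract penalized saddle-point well-posedness.) Let V and Q be real Hilbert spaces, a : V × V → ℝ a continuous symmetric bilinear form that is coercive on V, b : V × Q → ℝ a continuous bilinear form, c : Q × Q → ℝ a continuous symmetric positive-semidefinite bilinear form, and λ > 0. Then for every continuous linear functional L on V there exists a unique pair (u,p) ∈ V × Q with a(u,v) + b(v,p) = L(v) for all v ∈ V and b(u,q) - (1/λ) c(p,q) = 0 for all q ∈ Q, provided b satisfies the inf-sup condition: there is β > 0 with sup_{v ∈ V, v ≠ 0} b(v,q)/‖v‖ ≥ β ‖q‖ for all q ∈ Q. -/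

import Mathlib

noncomputable section

variable {V Q : Type*}
  [NormedAddCommGroup V] [InnerProductSpace ℝ V] [CompleteSpace V]
  [NormedAddCommGroup Q] [InnerProductSpace ℝ Q] [CompleteSpace Q]

/-- Continuity (boundedness) of a bilinear form with constant `C`. -/
def IsBddBilin {V Q : Type*} [NormedAddCommGroup V] [NormedAddCommGroup Q]
    [Module ℝ V] [Module ℝ Q] (b : V →ₗ[ℝ] Q →ₗ[ℝ] ℝ) (C : ℝ) : Prop :=
  ∀ v w, |b v w| ≤ C * ‖v‖ * ‖w‖

/-- The inf-sup (Babuška–Brezzi) condition with constant `β`: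
sup_{v ≠ 0} b(v,q)/‖v‖ ≥ β ‖q‖ for every q. -/
def InfSup {V Q : Type*} [NormedAddCommGroup V] [NormedAddCommGroup Q]
    [Module ℝ V] [Module ℝ Q] (b : V →ₗ[ℝ] Q →ₗ[ℝ] ℝ) (β : ℝ) : Prop :=
  ∀ q : Q, β * ‖q‖ ≤ ⨆ v : {v : V // v ≠ 0}, b v.1 q / ‖v.1‖

/-- Lax–Milgram: existence part packaged for our use. -/
lemma laxMilgram_exists {X : Type*} [NormedAddCommGroup X] [InnerProductSpace ℝ X]
    [CompleteSpace X] {B : X →L[ℝ] X →L[ℝ] ℝ} (hB : IsCoercive B) (f : X →L[ℝ] ℝ) :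
    ∃ u : X, ∀ w, B u w = f w := by
  refine ⟨hB.continuousLinearEquivOfBilin.symm ((InnerProductSpace.toDual ℝ X).symm f),
    fun w => ?_⟩
  rw [← hB.continuousLinearEquivOfBilin_apply, ContinuousLinearEquiv.apply_symm_apply,
    InnerProductSpace.toDual_symm_apply]

set_option maxHeartbeats 2000000 in
/-- abstract penalized saddle-point well-posedness. If a is continuous,
symmetric and coercive on V, b is continuous and satisfies the inf-sup condition,
c is continuous, symmetric and positive semi-definite on Q, and λ > 0, then for every
continuous linear functional L on V there is a unique (u,p) ∈ V × Q with
a(u,v) + b(v,p) = L(v) ∀v and b(u,q) - (1/λ)c(p,q) = 0 ∀q. -/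
theorem stmt_8 (a : V →ₗ[ℝ] V →ₗ[ℝ] ℝ) (b : V →ₗ[ℝ] Q →ₗ[ℝ] ℝ)
    (c : Q →ₗ[ℝ] Q →ₗ[ℝ] ℝ) (lam : ℝ) (hlam : 0 < lam)
    (Ca : ℝ) (ha_bdd : IsBddBilin a Ca) (ha_symm : ∀ u v, a u v = a v u)
    (α : ℝ) (hα : 0 < α) (ha_coer : ∀ v, α * ‖v‖ ^ 2 ≤ a v v)
    (Cb : ℝ) (hb_bdd : IsBddBilin b Cb)
    (β : ℝ) (hβ : 0 < β) (hb_infsup : InfSup b β)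
    (Cc : ℝ) (hc_bdd : IsBddBilin c Cc) (hc_symm : ∀ p q, c p q = c q p)
    (hc_pos : ∀ q, 0 ≤ c q q)
    (L : V →L[ℝ] ℝ) :
    ∃! up : V × Q,
      (∀ v : V, a up.1 v + b v up.2 = L v) ∧
      (∀ q : Q, b up.1 q - (1 / lam) * c up.2 q = 0) := by
  classical
  -- uniqueness of solutions of `a(u,·) = f` from coercivity
  have uniqV : ∀ u u' : V, (∀ v, a u v = a u' v) → u = u' := by
    intro u u' h
    have h0 : a (u - u') (u - u') = 0 := by
      have e : a (u - u') = a u - a u' := map_sub a u u'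
      rw [e, LinearMap.sub_apply, h (u - u'), sub_self]
    have h1 : α * ‖u - u'‖ ^ 2 ≤ 0 := by rw [← h0]; exact ha_coer (u - u')
    have h2 : ‖u - u'‖ ^ 2 = 0 := le_antisymm (by nlinarith) (sq_nonneg _)
    have : u - u' = 0 := by
      have := pow_eq_zero_iff (n := 2) (by norm_num) |>.mp h2
      simpa [norm_eq_zero] using this
    exact sub_eq_zero.mp this
  by_cases hV : Subsingleton V
  · -- V trivial ⇒ Q trivial ⇒ everything trivial
    haveI := hV
    haveI : IsEmpty {v : V // v ≠ 0} := ⟨fun v => v.2 (Subsingleton.elim _ _)⟩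
    have hQ : Subsingleton Q := by
      refine subsingleton_of_forall_eq 0 fun q => ?_
      have := hb_infsup q
      rw [Real.iSup_of_isEmpty] at this
      have hq : ‖q‖ ≤ 0 := by nlinarith [norm_nonneg q]
      have : ‖q‖ = 0 := le_antisymm hq (norm_nonneg q)
      exact norm_eq_zero.mp this
    haveI := hQ
    refine ⟨(0, 0), ⟨fun v => ?_, fun q => ?_⟩, fun y _ => Subsingleton.elim y (0, 0)⟩
    · have hv : v = 0 := Subsingleton.elim v 0
      simp [hv]
    · have hq : q = 0 := Subsingleton.elim q 0
      simp [hq]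
  · rw [not_subsingleton_iff_nontrivial] at hV
    obtain ⟨v₀, hv₀⟩ := exists_ne (0 : V)
    have hv₀n : 0 < ‖v₀‖ := norm_pos_iff.mpr hv₀
    haveI : Nonempty {v : V // v ≠ 0} := ⟨⟨v₀, hv₀⟩⟩
    have hCa : 0 < Ca := by
      have h1 := ha_coer v₀
      have h2 := ha_bdd v₀ v₀
      have h3 := le_abs_self (a v₀ v₀)
      nlinarith [mul_pos hv₀n hv₀n]
    -- continuous version of a, coercive
    obtain ⟨a', ha'app⟩ : ∃ a' : V →L[ℝ] V →L[ℝ] ℝ, ∀ v w, a' v w = a v w :=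
      ⟨a.mkContinuous₂ Ca (fun v w => by simpa [Real.norm_eq_abs] using ha_bdd v w),
        fun _ _ => rfl⟩
    have hcoer : IsCoercive a' := ⟨α, hα, fun u => by
      have := ha_coer u; rw [ha'app]; nlinarith [sq_nonneg ‖u‖]⟩
    -- solvability of a(u,·)=f
    have solveV : ∀ f : V →L[ℝ] ℝ, ∃ u : V, ∀ v, a u v = f v := by
      intro f
      obtain ⟨u, hu⟩ := laxMilgram_exists hcoer f
      exact ⟨u, fun v => by rw [← ha'app]; exact hu v⟩
    obtain ⟨u₀, hu₀⟩ := solveV L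
    -- continuous version of b
    obtain ⟨b', hb'app⟩ : ∃ b' : V →L[ℝ] Q →L[ℝ] ℝ, ∀ v q, b' v q = b v q :=
      ⟨b.mkContinuous₂ Cb (fun v w => by simpa [Real.norm_eq_abs] using hb_bdd v w),
        fun _ _ => rfl⟩
    -- the auxiliary solves w p : a (w p, v) = b (v, p)
    choose w hw using fun p : Q => solveV ((ContinuousLinearMap.flip b') p)
    have hw' : ∀ p v, a (w p) v = b v p := fun p v => by
      rw [hw p v, ContinuousLinearMap.flip_apply, hb'app]
    clear hw
    by_cases hQ : Subsingleton Q
    · haveI := hQ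
      refine ⟨(u₀, 0), ⟨fun v => ?_, fun q => ?_⟩, ?_⟩
      · simp [hu₀ v]
      · have hq : q = 0 := Subsingleton.elim q 0
        simp [hq]
      · rintro ⟨u', p'⟩ ⟨h1, h2⟩
        have hp' : p' = (0 : Q) := Subsingleton.elim _ _
        have hu' : u' = u₀ := by
          refine uniqV _ _ fun v => ?_
          have := h1 v
          rw [hp'] at this
          simp only [map_zero] at this
          rw [hu₀ v]; linarith
        simp [Prod.ext_iff, hu', hp']
    · rw [not_subsingleton_iff_nontrivial] at hQ
      obtain ⟨q₀, hq₀⟩ := exists_ne (0 : Q)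
      have hq₀n : 0 < ‖q₀‖ := norm_pos_iff.mpr hq₀
      have hsup_le : ∀ (q : Q) (M : ℝ), (∀ v : V, v ≠ 0 → b v q / ‖v‖ ≤ M) →
          (⨆ v : {v : V // v ≠ 0}, b v.1 q / ‖v.1‖) ≤ M := fun q M h =>
        ciSup_le fun v => h v.1 v.2
      have hCb : 0 < Cb := by
        have h1 := hb_infsup q₀
        have h2 : (⨆ v : {v : V // v ≠ 0}, b v.1 q₀ / ‖v.1‖) ≤ Cb * ‖q₀‖ := by
          refine hsup_le _ _ fun v hv => ?_
          have hvn : 0 < ‖v‖ := norm_pos_iff.mpr hv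
          rw [div_le_iff₀ hvn]
          calc b v q₀ ≤ |b v q₀| := le_abs_self _
            _ ≤ Cb * ‖v‖ * ‖q₀‖ := hb_bdd v q₀
            _ = Cb * ‖q₀‖ * ‖v‖ := by ring
        have h3 : β * ‖q₀‖ ≤ Cb * ‖q₀‖ := le_trans h1 h2
        exact lt_of_lt_of_le hβ ((mul_le_mul_iff_of_pos_right hq₀n).mp h3)
      have hCc : 0 ≤ Cc := by
        have h1 := hc_bdd q₀ q₀
        nlinarith [abs_nonneg (c q₀ q₀), mul_pos hq₀n hq₀n]
      -- lower bound : β ‖p‖ ≤ Ca ‖w p‖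
      have hwlow : ∀ p : Q, β * ‖p‖ ≤ Ca * ‖w p‖ := by
        intro p
        refine (hb_infsup p).trans (hsup_le _ _ fun v hv => ?_)
        have hvn : 0 < ‖v‖ := norm_pos_iff.mpr hv
        rw [div_le_iff₀ hvn]
        calc b v p = a (w p) v := (hw' p v).symm
          _ ≤ |a (w p) v| := le_abs_self _
          _ ≤ Ca * ‖w p‖ * ‖v‖ := ha_bdd (w p) v
      -- upper bound : ‖w p‖ ≤ (Cb/α) ‖p‖
      have hwup : ∀ p : Q, ‖w p‖ ≤ Cb / α * ‖p‖ := by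
        intro p
        have h1 : α * ‖w p‖ ^ 2 ≤ Cb * ‖w p‖ * ‖p‖ := by
          calc α * ‖w p‖ ^ 2 ≤ a (w p) (w p) := ha_coer (w p)
            _ = b (w p) p := hw' p (w p)
            _ ≤ |b (w p) p| := le_abs_self _
            _ ≤ Cb * ‖w p‖ * ‖p‖ := hb_bdd (w p) p
        rcases eq_or_lt_of_le (norm_nonneg (w p)) with hz | hz
        · rw [← hz]; positivity
        · rw [div_mul_eq_mul_div, le_div_iff₀ hα]
          nlinarith
      -- w is linear
      have wadd : ∀ p p' : Q, w (p + p') = w p + w p' := by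
        intro p p'
        refine uniqV _ _ fun v => ?_
        have e : a (w p + w p') = a (w p) + a (w p') := map_add a _ _
        rw [hw', e, LinearMap.add_apply, hw', hw', map_add]
      have wsmul : ∀ (t : ℝ) (p : Q), w (t • p) = t • w p := by
        intro t p
        refine uniqV _ _ fun v => ?_
        have e : a (t • w p) = t • a (w p) := map_smul a t _
        rw [hw', e, LinearMap.smul_apply, smul_eq_mul, hw', map_smul, smul_eq_mul]
      have hlam' : (0:ℝ) < 1 / lam := by positivity
      -- the Schur-complement bilinear form s(p,q) = b(w p, q) + (1/lam) c(p,q)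
      obtain ⟨s', hs'app⟩ : ∃ s' : Q →L[ℝ] Q →L[ℝ] ℝ,
          ∀ p q, s' p q = b (w p) q + (1 / lam) * c p q := by
        have hsbdd : ∀ p q : Q,
            ‖b (w p) q + (1 / lam) * c p q‖ ≤ (Cb * (Cb / α) + (1 / lam) * Cc) * ‖p‖ * ‖q‖ := by
          intro p q
          rw [Real.norm_eq_abs]
          calc |b (w p) q + 1 / lam * c p q| ≤ |b (w p) q| + |1 / lam * c p q| := abs_add_le _ _
            _ ≤ Cb * ‖w p‖ * ‖q‖ + 1 / lam * (Cc * ‖p‖ * ‖q‖) := by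
                refine add_le_add (hb_bdd (w p) q) ?_
                rw [abs_mul, abs_of_pos hlam']
                exact mul_le_mul_of_nonneg_left (hc_bdd p q) hlam'.le
            _ ≤ Cb * (Cb / α * ‖p‖) * ‖q‖ + 1 / lam * (Cc * ‖p‖ * ‖q‖) := by
                have := hwup p
                have hq : (0:ℝ) ≤ ‖q‖ := norm_nonneg q
                nlinarith [mul_nonneg (mul_nonneg hCb.le (sub_nonneg.mpr this)) hq]
            _ = (Cb * (Cb / α) + 1 / lam * Cc) * ‖p‖ * ‖q‖ := by ring
        refine ⟨LinearMap.mkContinuous₂ (LinearMap.mk₂ ℝ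
          (fun p q => b (w p) q + (1 / lam) * c p q)
          (fun p p' q => by
            have e : b (w p + w p') = b (w p) + b (w p') := map_add b _ _
            rw [wadd, e, LinearMap.add_apply, map_add, LinearMap.add_apply]; ring)
          (fun t p q => by
            have e : b (t • w p) = t • b (w p) := map_smul b t _
            rw [wsmul, e, LinearMap.smul_apply, smul_eq_mul, map_smul,
              LinearMap.smul_apply, smul_eq_mul, smul_eq_mul]; ring)
          (fun p q q' => by rw [map_add, map_add]; ring)
          (fun t p q => by
            rw [map_smul, map_smul, smul_eq_mul, smul_eq_mul, smul_eq_mul]; ring))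
          _ hsbdd, fun _ _ => rfl⟩
      -- s is coercive
      have hscoer : IsCoercive s' := by
        refine ⟨α * (β / Ca) ^ 2, by positivity, fun p => ?_⟩
        rw [hs'app]
        have h1 : β / Ca * ‖p‖ ≤ ‖w p‖ := by
          rw [div_mul_eq_mul_div, div_le_iff₀ hCa]
          linarith [hwlow p]
        have h2 : (0:ℝ) ≤ β / Ca * ‖p‖ := by positivity
        have h3 : α * ‖w p‖ ^ 2 ≤ a (w p) (w p) := ha_coer (w p)
        have h4 : a (w p) (w p) = b (w p) p := hw' p (w p)
        have h5 : 0 ≤ 1 / lam * c p p := mul_nonneg hlam'.le (hc_pos p)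
        nlinarith [mul_le_mul_of_nonneg_left (mul_self_le_mul_self h2 h1) hα.le]
      -- solve s(p,·) = b(u₀,·)
      obtain ⟨p, hp⟩ := laxMilgram_exists hscoer (b' u₀)
      have hp' : ∀ q, b (w p) q + (1 / lam) * c p q = b u₀ q := fun q => by
        rw [← hs'app, hp q, hb'app]
      -- uniqueness in Q from coercivity of s
      have uniqQ : ∀ p₁ p₂ : Q,
          (∀ q, b (w p₁) q + (1 / lam) * c p₁ q = b (w p₂) q + (1 / lam) * c p₂ q) →
          p₁ = p₂ := by
        intro p₁ p₂ h
        obtain ⟨γ, hγ, hγc⟩ := hscoer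
        have h0 : s' (p₁ - p₂) (p₁ - p₂) = 0 := by
          have e : s' (p₁ - p₂) = s' p₁ - s' p₂ := map_sub s' p₁ p₂
          rw [e, ContinuousLinearMap.sub_apply, hs'app, hs'app, h (p₁ - p₂), sub_self]
        have h1 : γ * ‖p₁ - p₂‖ * ‖p₁ - p₂‖ ≤ 0 := h0 ▸ hγc (p₁ - p₂)
        have h2 : ‖p₁ - p₂‖ = 0 := by
          by_contra hne
          have hx : 0 < ‖p₁ - p₂‖ := lt_of_le_of_ne (norm_nonneg _) (Ne.symm hne)
          nlinarith [mul_pos (mul_pos hγ hx) hx]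
        exact sub_eq_zero.mp (norm_eq_zero.mp h2)
      -- the solution
      refine ⟨(u₀ - w p, p), ⟨fun v => ?_, fun q => ?_⟩, ?_⟩
      · have e : a (u₀ - w p) = a u₀ - a (w p) := map_sub a _ _
        rw [e, LinearMap.sub_apply, hu₀ v, hw' p v]; ring
      · have e : b (u₀ - w p) = b u₀ - b (w p) := map_sub b _ _
        rw [e, LinearMap.sub_apply]
        have := hp' q
        dsimp only
        linarith
      · rintro ⟨u', p'⟩ ⟨h1, h2⟩
        have hu' : u' = u₀ - w p' := by
          refine uniqV _ _ fun v => ?_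
          have e : a (u₀ - w p') = a u₀ - a (w p') := map_sub a _ _
          rw [e, LinearMap.sub_apply, hu₀ v, hw' p' v]
          have := h1 v
          dsimp only at this
          linarith
        have hpp : p' = p := by
          refine uniqQ _ _ fun q => ?_
          have h2q := h2 q
          dsimp only at h2q
          rw [hu'] at h2q
          have e : b (u₀ - w p') = b u₀ - b (w p') := map_sub b _ _
          rw [e, LinearMap.sub_apply] at h2q
          have := hp' q
          linarith
        simp [Prod.ext_iff, hu', hpp]
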